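/- Let G be a directed graph with nonnegative rational arc weights, let s1 and u be distinct vertices, let v be an out-neighbor of u with w(u,v) ≤ α2, and let α1, α2 ∈ ℚ≥0. Then there exists a pair of compatible paths for s1 and u with bounds α1, α2 in G whose second path starts with the arc (u,v) if and only if there exists a vertex t in G − u (the graph obtained by deleting u and all arcs incident to it) such that d_{G−u}(s1,t) ≤ α1 and d_{G−u}(v,t) ≤ α2 − w(u,v). -/

import Mathlib

/-- `l` is a simple path (no repeated vertices) from `x` to `y` in the directed
graph with vertex set `S` and arc relation `A`, given as its list of vertices. -/
def IsPathOn {V : Type*} (S : Set V) (A : V → V → Prop) (x y : V) (l : List V) : Prop :=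
  (∀ v ∈ l, v ∈ S) ∧ l.Chain' A ∧ l.Nodup ∧ l.head? = some x ∧ l.getLast? = some y

/-- The length of a path (given by its vertex list) w.r.t. arc weights `w`:
the sum of the weights of its arcs. -/
def pathLen {V : Type*} (w : V → V → ℚ) (l : List V) : ℚ :=
  ((l.zip l.tail).map fun p => w p.1 p.2).sum

/-- `d_{(S,A)}(x,y) ≤ α`: there is a path from `x` to `y` of length at most `α`
in the graph with vertex set `S` and arcs `A`.  (On a finite graph, this is
equivalent to the shortest-path distance being at most `α`.) -/
def distLEOn {V : Type*} (S : Set V) (A : V → V → Prop) (w : V → V → ℚ)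
    (x y : V) (α : ℚ) : Prop :=
  ∃ l, IsPathOn S A x y l ∧ pathLen w l ≤ α

lemma pathLen_nil {V : Type*} (w : V → V → ℚ) : pathLen w ([] : List V) = 0 := rfl
lemma pathLen_single {V : Type*} (w : V → V → ℚ) (a : V) : pathLen w [a] = 0 := rfl

lemma pathLen_cons_cons {V : Type*} (w : V → V → ℚ) (a b : V) (l : List V) :
    pathLen w (a :: b :: l) = w a b + pathLen w (b :: l) := by
  simp [pathLen]

lemma pathLen_nonneg {V : Type*} (w : V → V → ℚ) :
    ∀ (l : List V), l.Chain' (fun a b => 0 ≤ w a b) → 0 ≤ pathLen w l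
  | [], _ => le_of_eq rfl
  | [a], _ => le_of_eq rfl
  | a :: b :: l, h => by
      rw [pathLen_cons_cons]
      have h1 := (List.isChain_cons_cons.mp h).1
      have h2 := (List.isChain_cons_cons.mp h).2
      have := pathLen_nonneg w (b :: l) h2
      linarith

lemma pathLen_prefix_le {V : Type*} (w : V → V → ℚ) :
    ∀ (p l : List V), l.Chain' (fun a b => 0 ≤ w a b) → p <+: l →
      pathLen w p ≤ pathLen w l
  | [], l, h, _ => by rw [pathLen_nil]; exact pathLen_nonneg w l h
  | [a], l, h, _ => by rw [pathLen_single]; exact pathLen_nonneg w l h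
  | a :: b :: p, l, h, hp => by
      obtain ⟨s, rfl⟩ := hp
      rw [List.cons_append, List.cons_append] at h ⊢
      rw [pathLen_cons_cons, pathLen_cons_cons]
      have h2 := (List.isChain_cons_cons.mp h).2
      have := pathLen_prefix_le w (b :: p) (b :: p ++ s) h2 ⟨s, rfl⟩
      rw [List.cons_append] at this
      linarith

lemma exists_firsthit {V : Type*} (P : V → Prop) :
    ∀ (l : List V), (∃ x ∈ l, P x) →
      ∃ pre t', (pre ++ [t']) <+: l ∧ P t' ∧ ∀ x ∈ pre, ¬ P x
  | [], h => by simp at h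
  | a :: l, h => by
      by_cases ha : P a
      · exact ⟨[], a, ⟨l, rfl⟩, ha, by simp⟩
      · obtain ⟨x, hx, hPx⟩ := h
        have hx' : x ∈ l := by
          rcases List.mem_cons.mp hx with rfl | h
          · exact absurd hPx ha
          · exact h
        obtain ⟨pre, t', ⟨s, hs⟩, hPt, hpre⟩ := exists_firsthit P l ⟨x, hx', hPx⟩
        refine ⟨a :: pre, t', ⟨s, by simp [← hs]⟩, hPt, ?_⟩
        intro y hy
        rcases List.mem_cons.mp hy with rfl | h
        · exact ha
        · exact hpre y h

lemma exists_prefix_getLast' {V : Type*} {x : V} {l : List V} (hx : x ∈ l) :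
    ∃ p, (p ++ [x]) <+: l := by
  obtain ⟨pre, t', hpre, ht', _⟩ := exists_firsthit (· = x) l ⟨x, hx, rfl⟩
  subst ht'
  exact ⟨pre, hpre⟩

lemma mem_of_getLast?' {α : Type*} : ∀ {l : List α} {a : α}, l.getLast? = some a → a ∈ l
  | [], _, h => by simp at h
  | [b], a, h => by
      simp only [List.getLast?_singleton, Option.some.injEq] at h
      simp [h]
  | b :: c :: tl, a, h => by
      rw [List.getLast?_cons_cons] at h
      exact List.mem_cons_of_mem _ (mem_of_getLast?' h)

/-- For `s1 ≠ u` and an out-neighbor `v` of `u` with `w(u,v) ≤ α2`: there is a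
pair of compatible paths for `s1` and `u` with bounds `α1, α2` in `G` whose
second path starts with the arc `(u,v)`, iff there is a vertex `t` of `G - u`
with `d_{G-u}(s1,t) ≤ α1` and `d_{G-u}(v,t) ≤ α2 - w(u,v)`. -/
theorem stmt4 {V : Type*} [Fintype V] (A : V → V → Prop) (w : V → V → ℚ)
    (hw : ∀ u v, A u v → 0 ≤ w u v)
    (s1 u : V) (hsu : s1 ≠ u) (v : V) (huv : A u v)
    (α1 α2 : ℚ) (hα1 : 0 ≤ α1) (hα2 : 0 ≤ α2) (hwv : w u v ≤ α2) :
    (∃ (t : V) (p1 rest : List V),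
        IsPathOn Set.univ A s1 t p1 ∧
        IsPathOn Set.univ A u t (u :: v :: rest) ∧
        (∀ x, x ∈ p1 → x ∈ u :: v :: rest → x = t) ∧
        pathLen w p1 ≤ α1 ∧ pathLen w (u :: v :: rest) ≤ α2) ↔
      ∃ t : V, t ≠ u ∧ distLEOn {x : V | x ≠ u} A w s1 t α1 ∧
        distLEOn {x : V | x ≠ u} A w v t (α2 - w u v) := by
  constructor
  · rintro ⟨t, p1, rest, ⟨-, hc1, hn1, hh1, hl1⟩, ⟨-, hc2, hn2, hh2, hl2⟩, hcompat, hlen1, hlen2⟩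
    have hl2' : (v :: rest).getLast? = some t := by
      rw [List.getLast?_cons_cons] at hl2; exact hl2
    have htmem : t ∈ v :: rest := mem_of_getLast?' hl2'
    have hunotin : u ∉ v :: rest := (List.nodup_cons.mp hn2).1
    have htu : t ≠ u := fun h => hunotin (h ▸ htmem)
    refine ⟨t, htu, ⟨p1, ⟨?_, hc1, hn1, hh1, hl1⟩, hlen1⟩,
      ⟨v :: rest, ⟨?_, (List.isChain_cons_cons.mp hc2).2, (List.nodup_cons.mp hn2).2, rfl, hl2'⟩, ?_⟩⟩
    · intro x hx
      simp only [Set.mem_setOf_eq]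
      intro hxu
      subst hxu
      exact htu (hcompat x hx List.mem_cons_self).symm
    · intro x hx
      simp only [Set.mem_setOf_eq]
      exact fun hxu => hunotin (hxu ▸ hx)
    · have := pathLen_cons_cons w u v rest
      linarith
  · rintro ⟨t, htu, ⟨l1, ⟨hS1, hc1, hn1, hh1, hl1⟩, hlen1⟩,
      ⟨l2, ⟨hS2, hc2, hn2, hh2, hl2⟩, hlen2⟩⟩
    have hNN1 : l1.Chain' (fun a b => 0 ≤ w a b) := hc1.imp (fun a b h => hw a b h)
    have hNN2 : l2.Chain' (fun a b => 0 ≤ w a b) := hc2.imp (fun a b h => hw a b h)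
    have ht1 : t ∈ l1 := mem_of_getLast?' hl1
    have ht2 : t ∈ l2 := mem_of_getLast?' hl2
    -- first vertex of l2 that lies on l1
    obtain ⟨pre, t', hpre, ht'1, hprenot⟩ :=
      exists_firsthit (· ∈ l1) l2 ⟨t, ht2, ht1⟩
    have hl2'ne : pre ++ [t'] ≠ [] := by simp
    -- head of pre ++ [t'] is v
    have hh2' : (pre ++ [t']).head? = some v := by
      obtain ⟨s, hs⟩ := hpre
      rw [← hh2, ← hs, List.head?_append_of_ne_nil _ hl2'ne]
    obtain ⟨rest, hrest⟩ : ∃ rest, pre ++ [t'] = v :: rest := by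
      cases h : pre ++ [t'] with
      | nil => exact absurd h hl2'ne
      | cons a tl =>
          rw [h, List.head?_cons, Option.some.injEq] at hh2'
          exact ⟨tl, by rw [hh2']⟩
    have hpre' : (v :: rest) <+: l2 := hrest ▸ hpre
    have hl2'last : (v :: rest).getLast? = some t' := hrest ▸ List.getLast?_concat
    -- prefix of l1 ending at t'
    obtain ⟨q, hq⟩ := exists_prefix_getLast' ht'1
    have hl1'ne : q ++ [t'] ≠ [] := by simp
    have hh1' : (q ++ [t']).head? = some s1 := by
      obtain ⟨s, hs⟩ := hq
      rw [← hh1, ← hs, List.head?_append_of_ne_nil _ hl1'ne]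
    have hl1'last : (q ++ [t']).getLast? = some t' := List.getLast?_concat
    have hsub1 : ∀ x ∈ q ++ [t'], x ∈ l1 := fun x hx => hq.subset hx
    have hsub2 : ∀ x ∈ v :: rest, x ∈ l2 := fun x hx => hpre'.subset hx
    have hune2 : u ∉ v :: rest := fun h => (hS2 u (hsub2 u h)) rfl
    refine ⟨t', q ++ [t'], rest, ⟨fun _ _ => trivial, hc1.prefix hq, hn1.sublist hq.sublist,
      hh1', hl1'last⟩, ⟨fun _ _ => trivial, ?_, ?_, rfl, ?_⟩, ?_, ?_, ?_⟩
    · -- chain' (u :: v :: rest)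
      exact List.isChain_cons_cons.mpr ⟨huv, hc2.prefix hpre'⟩
    · -- nodup (u :: v :: rest)
      exact List.nodup_cons.mpr ⟨hune2, hn2.sublist hpre'.sublist⟩
    · -- getLast? (u :: v :: rest) = some t'
      rw [List.getLast?_cons_cons]
      exact hl2'last
    · -- compatibility
      intro x hx1 hx2
      rcases List.mem_cons.mp hx2 with rfl | hx2'
      · exact absurd rfl (hS1 x (hsub1 x hx1))
      · rw [← hrest] at hx2'
        rcases List.mem_append.mp hx2' with hp | ht
        · exact absurd (hsub1 x hx1) (hprenot x hp)
        · simpa using ht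
    · exact le_trans (pathLen_prefix_le w (q ++ [t']) l1 hNN1 hq) hlen1
    · have h1 : pathLen w (u :: v :: rest) = w u v + pathLen w (v :: rest) :=
        pathLen_cons_cons w u v rest
      have h2 : pathLen w (v :: rest) ≤ pathLen w l2 := pathLen_prefix_le w _ l2 hNN2 hpre'
      linarith
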